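/- For every integer n with 4 ≤ n ≤ 100, the least prime in every coprime residue class modulo n is at most 3·φ(n)·log(n)·log(φ(n)), i.e. P(n) < 3 φ(n) log(n) log(φ(n)). -/

import Mathlib

noncomputable def leastPrime (n a : ℕ) : ℕ := sInf {p : ℕ | Nat.Prime p ∧ p % n = a % n}

noncomputable def P (n : ℕ) : ℕ :=
  Finset.sup ((Finset.range n).filter fun a => Nat.Coprime a n) (leastPrime n)

set_option maxRecDepth 100000

def isPrimeB (p : ℕ) : Bool :=
  decide (2 ≤ p) && (List.range 40).all fun d => decide (d < 2) || decide (p < d*d) || decide (p % d ≠ 0)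

lemma isPrimeB_prime (p : ℕ) (hp : p ≤ 1599) (h : isPrimeB p = true) : p.Prime := by
  simp only [isPrimeB, Bool.and_eq_true, List.all_eq_true, decide_eq_true_eq,
    Bool.or_eq_true] at h
  obtain ⟨h2, hall⟩ := h
  rw [Nat.prime_def_le_sqrt]
  refine ⟨h2, fun m hm hms => ?_⟩
  have hm40 : m < 40 := by
    have h1 : Nat.sqrt p ≤ Nat.sqrt 1599 := Nat.sqrt_le_sqrt hp
    have : Nat.sqrt 1599 = 39 := by norm_num
    omega
  have := hall m (List.mem_range.mpr hm40)
  rcases this with (h | h) | h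
  · omega
  · exact absurd (Nat.le_sqrt.mp hms) (by omega)
  · intro hd
    exact h (Nat.mod_eq_zero_of_dvd hd)

def checkAll (n B : ℕ) : Bool :=
  (List.range n).all fun a => !(Nat.gcd a n == 1) ||
    ((List.range (B/n+1)).any fun k => decide (a + k*n ≤ B) && isPrimeB (a + k*n))

lemma P_le (n B : ℕ) (hB : B ≤ 1599) (h : checkAll n B = true) : P n ≤ B := by
  apply Finset.sup_le
  intro a ha
  rw [Finset.mem_filter, Finset.mem_range] at ha
  rw [checkAll, List.all_eq_true] at h
  have h2 := h a (List.mem_range.mpr ha.1)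
  simp only [Bool.or_eq_true, Bool.not_eq_true', beq_eq_false_iff_ne, List.any_eq_true,
    Bool.and_eq_true, decide_eq_true_eq] at h2
  rcases h2 with h2 | ⟨k, _, hle, hpr⟩
  · exact absurd ha.2 h2
  · have hp := isPrimeB_prime _ (le_trans hle hB) hpr
    refine le_trans (Nat.sInf_le ⟨hp, ?_⟩) hle
    simp [Nat.add_mul_mod_self_right]

lemma log_ge (n p : ℕ) (h : ((2.7183:ℝ)^(p/2))^2 * 2.7183^(p%2) ≤ (n:ℝ)^100) : (p:ℝ) ≤ 100 * Real.log n := by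
  rw [← pow_mul, ← pow_add, Nat.div_add_mod'] at h
  have h1 : Real.exp 1 ≤ (2.7183:ℝ) := by
    have := Real.exp_one_lt_d9; linarith
  have hn : (0:ℝ) < (n:ℝ)^100 := lt_of_lt_of_le (by positivity) h
  have he : Real.exp p ≤ ((n:ℝ))^100 := by
    have he : Real.exp (p:ℝ) = (Real.exp 1)^p := by
      rw [← Real.exp_nat_mul]; norm_num
    rw [he]
    exact le_trans (pow_le_pow_left₀ (Real.exp_pos 1).le h1 p) h
  have := (Real.le_log_iff_exp_le hn).mpr he
  rwa [Real.log_pow, Nat.cast_ofNat] at this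

lemma case_gen (n B phi p1 p2 : ℕ) (hB : P n ≤ B) (ht : Nat.totient n = phi)
    (h1 : (p1:ℝ) ≤ 100 * Real.log n) (h2 : (p2:ℝ) ≤ 100 * Real.log phi)
    (hmar : 10000 * B < 3 * phi * p1 * p2) :
    (P n : ℝ) < 3 * (Nat.totient n : ℝ) * Real.log n * Real.log (Nat.totient n) := by
  rw [ht]
  have hl1 : (0:ℝ) ≤ 100 * Real.log n := le_trans (by positivity) h1
  have key : (p1:ℝ) * p2 ≤ (100 * Real.log n) * (100 * Real.log phi) :=
    mul_le_mul h1 h2 (by positivity) hl1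
  have hPB : (P n : ℝ) ≤ B := by exact_mod_cast hB
  have hm : (10000:ℝ) * B < 3 * phi * p1 * p2 := by exact_mod_cast hmar
  nlinarith [key, hPB, hm]

lemma case_4 : (P 4 : ℝ) < 3 * (Nat.totient 4 : ℝ) * Real.log 4 * Real.log (Nat.totient 4) :=
  case_gen 4 5 2 138 69 (P_le 4 5 (by norm_num) (by decide))
    (by decide) (log_ge 4 138 (by norm_num)) (log_ge 2 69 (by norm_num)) (by norm_num)

lemma case_5 : (P 5 : ℝ) < 3 * (Nat.totient 5 : ℝ) * Real.log 5 * Real.log (Nat.totient 5) :=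
  case_gen 5 19 4 160 138 (P_le 5 19 (by norm_num) (by decide))
    (by decide) (log_ge 5 160 (by norm_num)) (log_ge 4 138 (by norm_num)) (by norm_num)

lemma case_6 : (P 6 : ℝ) < 3 * (Nat.totient 6 : ℝ) * Real.log 6 * Real.log (Nat.totient 6) :=
  case_gen 6 7 2 179 69 (P_le 6 7 (by norm_num) (by decide))
    (by decide) (log_ge 6 179 (by norm_num)) (log_ge 2 69 (by norm_num)) (by norm_num)

lemma case_7 : (P 7 : ℝ) < 3 * (Nat.totient 7 : ℝ) * Real.log 7 * Real.log (Nat.totient 7) :=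
  case_gen 7 29 6 194 179 (P_le 7 29 (by norm_num) (by decide))
    (by decide) (log_ge 7 194 (by norm_num)) (log_ge 6 179 (by norm_num)) (by norm_num)

lemma case_8 : (P 8 : ℝ) < 3 * (Nat.totient 8 : ℝ) * Real.log 8 * Real.log (Nat.totient 8) :=
  case_gen 8 17 4 207 138 (P_le 8 17 (by norm_num) (by decide))
    (by decide) (log_ge 8 207 (by norm_num)) (log_ge 4 138 (by norm_num)) (by norm_num)

lemma case_9 : (P 9 : ℝ) < 3 * (Nat.totient 9 : ℝ) * Real.log 9 * Real.log (Nat.totient 9) :=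
  case_gen 9 19 6 219 179 (P_le 9 19 (by norm_num) (by decide))
    (by decide) (log_ge 9 219 (by norm_num)) (log_ge 6 179 (by norm_num)) (by norm_num)

lemma case_10 : (P 10 : ℝ) < 3 * (Nat.totient 10 : ℝ) * Real.log 10 * Real.log (Nat.totient 10) :=
  case_gen 10 19 4 230 138 (P_le 10 19 (by norm_num) (by decide))
    (by decide) (log_ge 10 230 (by norm_num)) (log_ge 4 138 (by norm_num)) (by norm_num)

lemma case_11 : (P 11 : ℝ) < 3 * (Nat.totient 11 : ℝ) * Real.log 11 * Real.log (Nat.totient 11) :=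
  case_gen 11 43 10 239 230 (P_le 11 43 (by norm_num) (by decide))
    (by decide) (log_ge 11 239 (by norm_num)) (log_ge 10 230 (by norm_num)) (by norm_num)

lemma case_12 : (P 12 : ℝ) < 3 * (Nat.totient 12 : ℝ) * Real.log 12 * Real.log (Nat.totient 12) :=
  case_gen 12 13 4 248 138 (P_le 12 13 (by norm_num) (by decide))
    (by decide) (log_ge 12 248 (by norm_num)) (log_ge 4 138 (by norm_num)) (by norm_num)

lemma case_13 : (P 13 : ℝ) < 3 * (Nat.totient 13 : ℝ) * Real.log 13 * Real.log (Nat.totient 13) :=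
  case_gen 13 103 12 256 248 (P_le 13 103 (by norm_num) (by decide))
    (by decide) (log_ge 13 256 (by norm_num)) (log_ge 12 248 (by norm_num)) (by norm_num)

lemma case_14 : (P 14 : ℝ) < 3 * (Nat.totient 14 : ℝ) * Real.log 14 * Real.log (Nat.totient 14) :=
  case_gen 14 29 6 263 179 (P_le 14 29 (by norm_num) (by decide))
    (by decide) (log_ge 14 263 (by norm_num)) (log_ge 6 179 (by norm_num)) (by norm_num)

lemma case_15 : (P 15 : ℝ) < 3 * (Nat.totient 15 : ℝ) * Real.log 15 * Real.log (Nat.totient 15) :=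
  case_gen 15 31 8 270 207 (P_le 15 31 (by norm_num) (by decide))
    (by decide) (log_ge 15 270 (by norm_num)) (log_ge 8 207 (by norm_num)) (by norm_num)

lemma case_16 : (P 16 : ℝ) < 3 * (Nat.totient 16 : ℝ) * Real.log 16 * Real.log (Nat.totient 16) :=
  case_gen 16 41 8 277 207 (P_le 16 41 (by norm_num) (by decide))
    (by decide) (log_ge 16 277 (by norm_num)) (log_ge 8 207 (by norm_num)) (by norm_num)

lemma case_17 : (P 17 : ℝ) < 3 * (Nat.totient 17 : ℝ) * Real.log 17 * Real.log (Nat.totient 17) :=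
  case_gen 17 103 16 283 277 (P_le 17 103 (by norm_num) (by decide))
    (by decide) (log_ge 17 283 (by norm_num)) (log_ge 16 277 (by norm_num)) (by norm_num)

lemma case_18 : (P 18 : ℝ) < 3 * (Nat.totient 18 : ℝ) * Real.log 18 * Real.log (Nat.totient 18) :=
  case_gen 18 19 6 289 179 (P_le 18 19 (by norm_num) (by decide))
    (by decide) (log_ge 18 289 (by norm_num)) (log_ge 6 179 (by norm_num)) (by norm_num)

lemma case_19 : (P 19 : ℝ) < 3 * (Nat.totient 19 : ℝ) * Real.log 19 * Real.log (Nat.totient 19) :=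
  case_gen 19 191 18 294 289 (P_le 19 191 (by norm_num) (by decide))
    (by decide) (log_ge 19 294 (by norm_num)) (log_ge 18 289 (by norm_num)) (by norm_num)

lemma case_20 : (P 20 : ℝ) < 3 * (Nat.totient 20 : ℝ) * Real.log 20 * Real.log (Nat.totient 20) :=
  case_gen 20 41 8 299 207 (P_le 20 41 (by norm_num) (by decide))
    (by decide) (log_ge 20 299 (by norm_num)) (log_ge 8 207 (by norm_num)) (by norm_num)

lemma case_21 : (P 21 : ℝ) < 3 * (Nat.totient 21 : ℝ) * Real.log 21 * Real.log (Nat.totient 21) :=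
  case_gen 21 67 12 304 248 (P_le 21 67 (by norm_num) (by decide))
    (by decide) (log_ge 21 304 (by norm_num)) (log_ge 12 248 (by norm_num)) (by norm_num)

lemma case_22 : (P 22 : ℝ) < 3 * (Nat.totient 22 : ℝ) * Real.log 22 * Real.log (Nat.totient 22) :=
  case_gen 22 43 10 309 230 (P_le 22 43 (by norm_num) (by decide))
    (by decide) (log_ge 22 309 (by norm_num)) (log_ge 10 230 (by norm_num)) (by norm_num)

lemma case_23 : (P 23 : ℝ) < 3 * (Nat.totient 23 : ℝ) * Real.log 23 * Real.log (Nat.totient 23) :=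
  case_gen 23 137 22 313 309 (P_le 23 137 (by norm_num) (by decide))
    (by decide) (log_ge 23 313 (by norm_num)) (log_ge 22 309 (by norm_num)) (by norm_num)

lemma case_24 : (P 24 : ℝ) < 3 * (Nat.totient 24 : ℝ) * Real.log 24 * Real.log (Nat.totient 24) :=
  case_gen 24 73 8 317 207 (P_le 24 73 (by norm_num) (by decide))
    (by decide) (log_ge 24 317 (by norm_num)) (log_ge 8 207 (by norm_num)) (by norm_num)

lemma case_25 : (P 25 : ℝ) < 3 * (Nat.totient 25 : ℝ) * Real.log 25 * Real.log (Nat.totient 25) :=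
  case_gen 25 149 20 321 299 (P_le 25 149 (by norm_num) (by decide))
    (by decide) (log_ge 25 321 (by norm_num)) (log_ge 20 299 (by norm_num)) (by norm_num)

lemma case_26 : (P 26 : ℝ) < 3 * (Nat.totient 26 : ℝ) * Real.log 26 * Real.log (Nat.totient 26) :=
  case_gen 26 103 12 325 248 (P_le 26 103 (by norm_num) (by decide))
    (by decide) (log_ge 26 325 (by norm_num)) (log_ge 12 248 (by norm_num)) (by norm_num)

lemma case_27 : (P 27 : ℝ) < 3 * (Nat.totient 27 : ℝ) * Real.log 27 * Real.log (Nat.totient 27) :=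
  case_gen 27 109 18 329 289 (P_le 27 109 (by norm_num) (by decide))
    (by decide) (log_ge 27 329 (by norm_num)) (log_ge 18 289 (by norm_num)) (by norm_num)

lemma case_28 : (P 28 : ℝ) < 3 * (Nat.totient 28 : ℝ) * Real.log 28 * Real.log (Nat.totient 28) :=
  case_gen 28 83 12 333 248 (P_le 28 83 (by norm_num) (by decide))
    (by decide) (log_ge 28 333 (by norm_num)) (log_ge 12 248 (by norm_num)) (by norm_num)

lemma case_29 : (P 29 : ℝ) < 3 * (Nat.totient 29 : ℝ) * Real.log 29 * Real.log (Nat.totient 29) :=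
  case_gen 29 317 28 336 333 (P_le 29 317 (by norm_num) (by decide))
    (by decide) (log_ge 29 336 (by norm_num)) (log_ge 28 333 (by norm_num)) (by norm_num)

lemma case_30 : (P 30 : ℝ) < 3 * (Nat.totient 30 : ℝ) * Real.log 30 * Real.log (Nat.totient 30) :=
  case_gen 30 31 8 340 207 (P_le 30 31 (by norm_num) (by decide))
    (by decide) (log_ge 30 340 (by norm_num)) (log_ge 8 207 (by norm_num)) (by norm_num)

lemma case_31 : (P 31 : ℝ) < 3 * (Nat.totient 31 : ℝ) * Real.log 31 * Real.log (Nat.totient 31) :=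
  case_gen 31 311 30 343 340 (P_le 31 311 (by norm_num) (by decide))
    (by decide) (log_ge 31 343 (by norm_num)) (log_ge 30 340 (by norm_num)) (by norm_num)

lemma case_32 : (P 32 : ℝ) < 3 * (Nat.totient 32 : ℝ) * Real.log 32 * Real.log (Nat.totient 32) :=
  case_gen 32 97 16 346 277 (P_le 32 97 (by norm_num) (by decide))
    (by decide) (log_ge 32 346 (by norm_num)) (log_ge 16 277 (by norm_num)) (by norm_num)

lemma case_33 : (P 33 : ℝ) < 3 * (Nat.totient 33 : ℝ) * Real.log 33 * Real.log (Nat.totient 33) :=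
  case_gen 33 181 20 349 299 (P_le 33 181 (by norm_num) (by decide))
    (by decide) (log_ge 33 349 (by norm_num)) (log_ge 20 299 (by norm_num)) (by norm_num)

lemma case_34 : (P 34 : ℝ) < 3 * (Nat.totient 34 : ℝ) * Real.log 34 * Real.log (Nat.totient 34) :=
  case_gen 34 103 16 352 277 (P_le 34 103 (by norm_num) (by decide))
    (by decide) (log_ge 34 352 (by norm_num)) (log_ge 16 277 (by norm_num)) (by norm_num)

lemma case_35 : (P 35 : ℝ) < 3 * (Nat.totient 35 : ℝ) * Real.log 35 * Real.log (Nat.totient 35) :=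
  case_gen 35 191 24 355 317 (P_le 35 191 (by norm_num) (by decide))
    (by decide) (log_ge 35 355 (by norm_num)) (log_ge 24 317 (by norm_num)) (by norm_num)

lemma case_36 : (P 36 : ℝ) < 3 * (Nat.totient 36 : ℝ) * Real.log 36 * Real.log (Nat.totient 36) :=
  case_gen 36 71 12 358 248 (P_le 36 71 (by norm_num) (by decide))
    (by decide) (log_ge 36 358 (by norm_num)) (log_ge 12 248 (by norm_num)) (by norm_num)

lemma case_37 : (P 37 : ℝ) < 3 * (Nat.totient 37 : ℝ) * Real.log 37 * Real.log (Nat.totient 37) :=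
  case_gen 37 439 36 361 358 (P_le 37 439 (by norm_num) (by decide))
    (by decide) (log_ge 37 361 (by norm_num)) (log_ge 36 358 (by norm_num)) (by norm_num)

lemma case_38 : (P 38 : ℝ) < 3 * (Nat.totient 38 : ℝ) * Real.log 38 * Real.log (Nat.totient 38) :=
  case_gen 38 191 18 363 289 (P_le 38 191 (by norm_num) (by decide))
    (by decide) (log_ge 38 363 (by norm_num)) (log_ge 18 289 (by norm_num)) (by norm_num)

lemma case_39 : (P 39 : ℝ) < 3 * (Nat.totient 39 : ℝ) * Real.log 39 * Real.log (Nat.totient 39) :=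
  case_gen 39 233 24 366 317 (P_le 39 233 (by norm_num) (by decide))
    (by decide) (log_ge 39 366 (by norm_num)) (log_ge 24 317 (by norm_num)) (by norm_num)

lemma case_40 : (P 40 : ℝ) < 3 * (Nat.totient 40 : ℝ) * Real.log 40 * Real.log (Nat.totient 40) :=
  case_gen 40 89 16 368 277 (P_le 40 89 (by norm_num) (by decide))
    (by decide) (log_ge 40 368 (by norm_num)) (log_ge 16 277 (by norm_num)) (by norm_num)

lemma case_41 : (P 41 : ℝ) < 3 * (Nat.totient 41 : ℝ) * Real.log 41 * Real.log (Nat.totient 41) :=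
  case_gen 41 379 40 371 368 (P_le 41 379 (by norm_num) (by decide))
    (by decide) (log_ge 41 371 (by norm_num)) (log_ge 40 368 (by norm_num)) (by norm_num)

lemma case_42 : (P 42 : ℝ) < 3 * (Nat.totient 42 : ℝ) * Real.log 42 * Real.log (Nat.totient 42) :=
  case_gen 42 67 12 373 248 (P_le 42 67 (by norm_num) (by decide))
    (by decide) (log_ge 42 373 (by norm_num)) (log_ge 12 248 (by norm_num)) (by norm_num)

lemma case_43 : (P 43 : ℝ) < 3 * (Nat.totient 43 : ℝ) * Real.log 43 * Real.log (Nat.totient 43) :=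
  case_gen 43 463 42 376 373 (P_le 43 463 (by norm_num) (by decide))
    (by decide) (log_ge 43 376 (by norm_num)) (log_ge 42 373 (by norm_num)) (by norm_num)

lemma case_44 : (P 44 : ℝ) < 3 * (Nat.totient 44 : ℝ) * Real.log 44 * Real.log (Nat.totient 44) :=
  case_gen 44 113 20 378 299 (P_le 44 113 (by norm_num) (by decide))
    (by decide) (log_ge 44 378 (by norm_num)) (log_ge 20 299 (by norm_num)) (by norm_num)

lemma case_45 : (P 45 : ℝ) < 3 * (Nat.totient 45 : ℝ) * Real.log 45 * Real.log (Nat.totient 45) :=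
  case_gen 45 181 24 380 317 (P_le 45 181 (by norm_num) (by decide))
    (by decide) (log_ge 45 380 (by norm_num)) (log_ge 24 317 (by norm_num)) (by norm_num)

lemma case_46 : (P 46 : ℝ) < 3 * (Nat.totient 46 : ℝ) * Real.log 46 * Real.log (Nat.totient 46) :=
  case_gen 46 137 22 382 309 (P_le 46 137 (by norm_num) (by decide))
    (by decide) (log_ge 46 382 (by norm_num)) (log_ge 22 309 (by norm_num)) (by norm_num)

lemma case_47 : (P 47 : ℝ) < 3 * (Nat.totient 47 : ℝ) * Real.log 47 * Real.log (Nat.totient 47) :=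
  case_gen 47 967 46 385 382 (P_le 47 967 (by norm_num) (by decide))
    (by decide) (log_ge 47 385 (by norm_num)) (log_ge 46 382 (by norm_num)) (by norm_num)

lemma case_48 : (P 48 : ℝ) < 3 * (Nat.totient 48 : ℝ) * Real.log 48 * Real.log (Nat.totient 48) :=
  case_gen 48 97 16 387 277 (P_le 48 97 (by norm_num) (by decide))
    (by decide) (log_ge 48 387 (by norm_num)) (log_ge 16 277 (by norm_num)) (by norm_num)

lemma case_49 : (P 49 : ℝ) < 3 * (Nat.totient 49 : ℝ) * Real.log 49 * Real.log (Nat.totient 49) :=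
  case_gen 49 613 42 389 373 (P_le 49 613 (by norm_num) (by decide))
    (by decide) (log_ge 49 389 (by norm_num)) (log_ge 42 373 (by norm_num)) (by norm_num)

lemma case_50 : (P 50 : ℝ) < 3 * (Nat.totient 50 : ℝ) * Real.log 50 * Real.log (Nat.totient 50) :=
  case_gen 50 149 20 391 299 (P_le 50 149 (by norm_num) (by decide))
    (by decide) (log_ge 50 391 (by norm_num)) (log_ge 20 299 (by norm_num)) (by norm_num)

lemma case_51 : (P 51 : ℝ) < 3 * (Nat.totient 51 : ℝ) * Real.log 51 * Real.log (Nat.totient 51) :=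
  case_gen 51 197 32 393 346 (P_le 51 197 (by norm_num) (by decide))
    (by decide) (log_ge 51 393 (by norm_num)) (log_ge 32 346 (by norm_num)) (by norm_num)

lemma case_52 : (P 52 : ℝ) < 3 * (Nat.totient 52 : ℝ) * Real.log 52 * Real.log (Nat.totient 52) :=
  case_gen 52 181 24 395 317 (P_le 52 181 (by norm_num) (by decide))
    (by decide) (log_ge 52 395 (by norm_num)) (log_ge 24 317 (by norm_num)) (by norm_num)

lemma case_53 : (P 53 : ℝ) < 3 * (Nat.totient 53 : ℝ) * Real.log 53 * Real.log (Nat.totient 53) :=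
  case_gen 53 607 52 397 395 (P_le 53 607 (by norm_num) (by decide))
    (by decide) (log_ge 53 397 (by norm_num)) (log_ge 52 395 (by norm_num)) (by norm_num)

lemma case_54 : (P 54 : ℝ) < 3 * (Nat.totient 54 : ℝ) * Real.log 54 * Real.log (Nat.totient 54) :=
  case_gen 54 109 18 398 289 (P_le 54 109 (by norm_num) (by decide))
    (by decide) (log_ge 54 398 (by norm_num)) (log_ge 18 289 (by norm_num)) (by norm_num)

lemma case_55 : (P 55 : ℝ) < 3 * (Nat.totient 55 : ℝ) * Real.log 55 * Real.log (Nat.totient 55) :=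
  case_gen 55 331 40 400 368 (P_le 55 331 (by norm_num) (by decide))
    (by decide) (log_ge 55 400 (by norm_num)) (log_ge 40 368 (by norm_num)) (by norm_num)

lemma case_56 : (P 56 : ℝ) < 3 * (Nat.totient 56 : ℝ) * Real.log 56 * Real.log (Nat.totient 56) :=
  case_gen 56 233 24 402 317 (P_le 56 233 (by norm_num) (by decide))
    (by decide) (log_ge 56 402 (by norm_num)) (log_ge 24 317 (by norm_num)) (by norm_num)

lemma case_57 : (P 57 : ℝ) < 3 * (Nat.totient 57 : ℝ) * Real.log 57 * Real.log (Nat.totient 57) :=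
  case_gen 57 433 36 404 358 (P_le 57 433 (by norm_num) (by decide))
    (by decide) (log_ge 57 404 (by norm_num)) (log_ge 36 358 (by norm_num)) (by norm_num)

lemma case_58 : (P 58 : ℝ) < 3 * (Nat.totient 58 : ℝ) * Real.log 58 * Real.log (Nat.totient 58) :=
  case_gen 58 317 28 406 333 (P_le 58 317 (by norm_num) (by decide))
    (by decide) (log_ge 58 406 (by norm_num)) (log_ge 28 333 (by norm_num)) (by norm_num)

lemma case_59 : (P 59 : ℝ) < 3 * (Nat.totient 59 : ℝ) * Real.log 59 * Real.log (Nat.totient 59) :=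
  case_gen 59 709 58 407 406 (P_le 59 709 (by norm_num) (by decide))
    (by decide) (log_ge 59 407 (by norm_num)) (log_ge 58 406 (by norm_num)) (by norm_num)

lemma case_60 : (P 60 : ℝ) < 3 * (Nat.totient 60 : ℝ) * Real.log 60 * Real.log (Nat.totient 60) :=
  case_gen 60 109 16 409 277 (P_le 60 109 (by norm_num) (by decide))
    (by decide) (log_ge 60 409 (by norm_num)) (log_ge 16 277 (by norm_num)) (by norm_num)

lemma case_61 : (P 61 : ℝ) < 3 * (Nat.totient 61 : ℝ) * Real.log 61 * Real.log (Nat.totient 61) :=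
  case_gen 61 1061 60 411 409 (P_le 61 1061 (by norm_num) (by decide))
    (by decide) (log_ge 61 411 (by norm_num)) (log_ge 60 409 (by norm_num)) (by norm_num)

lemma case_62 : (P 62 : ℝ) < 3 * (Nat.totient 62 : ℝ) * Real.log 62 * Real.log (Nat.totient 62) :=
  case_gen 62 311 30 412 340 (P_le 62 311 (by norm_num) (by decide))
    (by decide) (log_ge 62 412 (by norm_num)) (log_ge 30 340 (by norm_num)) (by norm_num)

lemma case_63 : (P 63 : ℝ) < 3 * (Nat.totient 63 : ℝ) * Real.log 63 * Real.log (Nat.totient 63) :=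
  case_gen 63 373 36 414 358 (P_le 63 373 (by norm_num) (by decide))
    (by decide) (log_ge 63 414 (by norm_num)) (log_ge 36 358 (by norm_num)) (by norm_num)

lemma case_64 : (P 64 : ℝ) < 3 * (Nat.totient 64 : ℝ) * Real.log 64 * Real.log (Nat.totient 64) :=
  case_gen 64 313 32 415 346 (P_le 64 313 (by norm_num) (by decide))
    (by decide) (log_ge 64 415 (by norm_num)) (log_ge 32 346 (by norm_num)) (by norm_num)

lemma case_65 : (P 65 : ℝ) < 3 * (Nat.totient 65 : ℝ) * Real.log 65 * Real.log (Nat.totient 65) :=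
  case_gen 65 389 48 417 387 (P_le 65 389 (by norm_num) (by decide))
    (by decide) (log_ge 65 417 (by norm_num)) (log_ge 48 387 (by norm_num)) (by norm_num)

lemma case_66 : (P 66 : ℝ) < 3 * (Nat.totient 66 : ℝ) * Real.log 66 * Real.log (Nat.totient 66) :=
  case_gen 66 181 20 418 299 (P_le 66 181 (by norm_num) (by decide))
    (by decide) (log_ge 66 418 (by norm_num)) (log_ge 20 299 (by norm_num)) (by norm_num)

lemma case_67 : (P 67 : ℝ) < 3 * (Nat.totient 67 : ℝ) * Real.log 67 * Real.log (Nat.totient 67) :=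
  case_gen 67 1013 66 420 418 (P_le 67 1013 (by norm_num) (by decide))
    (by decide) (log_ge 67 420 (by norm_num)) (log_ge 66 418 (by norm_num)) (by norm_num)

lemma case_68 : (P 68 : ℝ) < 3 * (Nat.totient 68 : ℝ) * Real.log 68 * Real.log (Nat.totient 68) :=
  case_gen 68 389 32 421 346 (P_le 68 389 (by norm_num) (by decide))
    (by decide) (log_ge 68 421 (by norm_num)) (log_ge 32 346 (by norm_num)) (by norm_num)

lemma case_69 : (P 69 : ℝ) < 3 * (Nat.totient 69 : ℝ) * Real.log 69 * Real.log (Nat.totient 69) :=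
  case_gen 69 479 44 423 378 (P_le 69 479 (by norm_num) (by decide))
    (by decide) (log_ge 69 423 (by norm_num)) (log_ge 44 378 (by norm_num)) (by norm_num)

lemma case_70 : (P 70 : ℝ) < 3 * (Nat.totient 70 : ℝ) * Real.log 70 * Real.log (Nat.totient 70) :=
  case_gen 70 191 24 424 317 (P_le 70 191 (by norm_num) (by decide))
    (by decide) (log_ge 70 424 (by norm_num)) (log_ge 24 317 (by norm_num)) (by norm_num)

lemma case_71 : (P 71 : ℝ) < 3 * (Nat.totient 71 : ℝ) * Real.log 71 * Real.log (Nat.totient 71) :=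
  case_gen 71 829 70 426 424 (P_le 71 829 (by norm_num) (by decide))
    (by decide) (log_ge 71 426 (by norm_num)) (log_ge 70 424 (by norm_num)) (by norm_num)

lemma case_72 : (P 72 : ℝ) < 3 * (Nat.totient 72 : ℝ) * Real.log 72 * Real.log (Nat.totient 72) :=
  case_gen 72 193 24 427 317 (P_le 72 193 (by norm_num) (by decide))
    (by decide) (log_ge 72 427 (by norm_num)) (log_ge 24 317 (by norm_num)) (by norm_num)

lemma case_73 : (P 73 : ℝ) < 3 * (Nat.totient 73 : ℝ) * Real.log 73 * Real.log (Nat.totient 73) :=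
  case_gen 73 1021 72 429 427 (P_le 73 1021 (by norm_num) (by decide))
    (by decide) (log_ge 73 429 (by norm_num)) (log_ge 72 427 (by norm_num)) (by norm_num)

lemma case_74 : (P 74 : ℝ) < 3 * (Nat.totient 74 : ℝ) * Real.log 74 * Real.log (Nat.totient 74) :=
  case_gen 74 439 36 430 358 (P_le 74 439 (by norm_num) (by decide))
    (by decide) (log_ge 74 430 (by norm_num)) (log_ge 36 358 (by norm_num)) (by norm_num)

lemma case_75 : (P 75 : ℝ) < 3 * (Nat.totient 75 : ℝ) * Real.log 75 * Real.log (Nat.totient 75) :=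
  case_gen 75 293 40 431 368 (P_le 75 293 (by norm_num) (by decide))
    (by decide) (log_ge 75 431 (by norm_num)) (log_ge 40 368 (by norm_num)) (by norm_num)

lemma case_76 : (P 76 : ℝ) < 3 * (Nat.totient 76 : ℝ) * Real.log 76 * Real.log (Nat.totient 76) :=
  case_gen 76 373 36 433 358 (P_le 76 373 (by norm_num) (by decide))
    (by decide) (log_ge 76 433 (by norm_num)) (log_ge 36 358 (by norm_num)) (by norm_num)

lemma case_77 : (P 77 : ℝ) < 3 * (Nat.totient 77 : ℝ) * Real.log 77 * Real.log (Nat.totient 77) :=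
  case_gen 77 631 60 434 409 (P_le 77 631 (by norm_num) (by decide))
    (by decide) (log_ge 77 434 (by norm_num)) (log_ge 60 409 (by norm_num)) (by norm_num)

lemma case_78 : (P 78 : ℝ) < 3 * (Nat.totient 78 : ℝ) * Real.log 78 * Real.log (Nat.totient 78) :=
  case_gen 78 233 24 435 317 (P_le 78 233 (by norm_num) (by decide))
    (by decide) (log_ge 78 435 (by norm_num)) (log_ge 24 317 (by norm_num)) (by norm_num)

lemma case_79 : (P 79 : ℝ) < 3 * (Nat.totient 79 : ℝ) * Real.log 79 * Real.log (Nat.totient 79) :=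
  case_gen 79 1319 78 436 435 (P_le 79 1319 (by norm_num) (by decide))
    (by decide) (log_ge 79 436 (by norm_num)) (log_ge 78 435 (by norm_num)) (by norm_num)

lemma case_80 : (P 80 : ℝ) < 3 * (Nat.totient 80 : ℝ) * Real.log 80 * Real.log (Nat.totient 80) :=
  case_gen 80 449 32 438 346 (P_le 80 449 (by norm_num) (by decide))
    (by decide) (log_ge 80 438 (by norm_num)) (log_ge 32 346 (by norm_num)) (by norm_num)

lemma case_81 : (P 81 : ℝ) < 3 * (Nat.totient 81 : ℝ) * Real.log 81 * Real.log (Nat.totient 81) :=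
  case_gen 81 647 54 439 398 (P_le 81 647 (by norm_num) (by decide))
    (by decide) (log_ge 81 439 (by norm_num)) (log_ge 54 398 (by norm_num)) (by norm_num)

lemma case_82 : (P 82 : ℝ) < 3 * (Nat.totient 82 : ℝ) * Real.log 82 * Real.log (Nat.totient 82) :=
  case_gen 82 379 40 440 368 (P_le 82 379 (by norm_num) (by decide))
    (by decide) (log_ge 82 440 (by norm_num)) (log_ge 40 368 (by norm_num)) (by norm_num)

lemma case_83 : (P 83 : ℝ) < 3 * (Nat.totient 83 : ℝ) * Real.log 83 * Real.log (Nat.totient 83) :=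
  case_gen 83 1201 82 441 440 (P_le 83 1201 (by norm_num) (by decide))
    (by decide) (log_ge 83 441 (by norm_num)) (log_ge 82 440 (by norm_num)) (by norm_num)

lemma case_84 : (P 84 : ℝ) < 3 * (Nat.totient 84 : ℝ) * Real.log 84 * Real.log (Nat.totient 84) :=
  case_gen 84 337 24 443 317 (P_le 84 337 (by norm_num) (by decide))
    (by decide) (log_ge 84 443 (by norm_num)) (log_ge 24 317 (by norm_num)) (by norm_num)

lemma case_85 : (P 85 : ℝ) < 3 * (Nat.totient 85 : ℝ) * Real.log 85 * Real.log (Nat.totient 85) :=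
  case_gen 85 1021 64 444 415 (P_le 85 1021 (by norm_num) (by decide))
    (by decide) (log_ge 85 444 (by norm_num)) (log_ge 64 415 (by norm_num)) (by norm_num)

lemma case_86 : (P 86 : ℝ) < 3 * (Nat.totient 86 : ℝ) * Real.log 86 * Real.log (Nat.totient 86) :=
  case_gen 86 463 42 445 373 (P_le 86 463 (by norm_num) (by decide))
    (by decide) (log_ge 86 445 (by norm_num)) (log_ge 42 373 (by norm_num)) (by norm_num)

lemma case_87 : (P 87 : ℝ) < 3 * (Nat.totient 87 : ℝ) * Real.log 87 * Real.log (Nat.totient 87) :=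
  case_gen 87 691 56 446 402 (P_le 87 691 (by norm_num) (by decide))
    (by decide) (log_ge 87 446 (by norm_num)) (log_ge 56 402 (by norm_num)) (by norm_num)

lemma case_88 : (P 88 : ℝ) < 3 * (Nat.totient 88 : ℝ) * Real.log 88 * Real.log (Nat.totient 88) :=
  case_gen 88 397 40 447 368 (P_le 88 397 (by norm_num) (by decide))
    (by decide) (log_ge 88 447 (by norm_num)) (log_ge 40 368 (by norm_num)) (by norm_num)

lemma case_89 : (P 89 : ℝ) < 3 * (Nat.totient 89 : ℝ) * Real.log 89 * Real.log (Nat.totient 89) :=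
  case_gen 89 1493 88 448 447 (P_le 89 1493 (by norm_num) (by decide))
    (by decide) (log_ge 89 448 (by norm_num)) (log_ge 88 447 (by norm_num)) (by norm_num)

lemma case_90 : (P 90 : ℝ) < 3 * (Nat.totient 90 : ℝ) * Real.log 90 * Real.log (Nat.totient 90) :=
  case_gen 90 181 24 449 317 (P_le 90 181 (by norm_num) (by decide))
    (by decide) (log_ge 90 449 (by norm_num)) (log_ge 24 317 (by norm_num)) (by norm_num)

lemma case_91 : (P 91 : ℝ) < 3 * (Nat.totient 91 : ℝ) * Real.log 91 * Real.log (Nat.totient 91) :=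
  case_gen 91 1051 72 451 427 (P_le 91 1051 (by norm_num) (by decide))
    (by decide) (log_ge 91 451 (by norm_num)) (log_ge 72 427 (by norm_num)) (by norm_num)

lemma case_92 : (P 92 : ℝ) < 3 * (Nat.totient 92 : ℝ) * Real.log 92 * Real.log (Nat.totient 92) :=
  case_gen 92 577 44 452 378 (P_le 92 577 (by norm_num) (by decide))
    (by decide) (log_ge 92 452 (by norm_num)) (log_ge 44 378 (by norm_num)) (by norm_num)

lemma case_93 : (P 93 : ℝ) < 3 * (Nat.totient 93 : ℝ) * Real.log 93 * Real.log (Nat.totient 93) :=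
  case_gen 93 701 60 453 409 (P_le 93 701 (by norm_num) (by decide))
    (by decide) (log_ge 93 453 (by norm_num)) (log_ge 60 409 (by norm_num)) (by norm_num)

lemma case_94 : (P 94 : ℝ) < 3 * (Nat.totient 94 : ℝ) * Real.log 94 * Real.log (Nat.totient 94) :=
  case_gen 94 967 46 454 382 (P_le 94 967 (by norm_num) (by decide))
    (by decide) (log_ge 94 454 (by norm_num)) (log_ge 46 382 (by norm_num)) (by norm_num)

lemma case_95 : (P 95 : ℝ) < 3 * (Nat.totient 95 : ℝ) * Real.log 95 * Real.log (Nat.totient 95) :=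
  case_gen 95 1103 72 455 427 (P_le 95 1103 (by norm_num) (by decide))
    (by decide) (log_ge 95 455 (by norm_num)) (log_ge 72 427 (by norm_num)) (by norm_num)

lemma case_96 : (P 96 : ℝ) < 3 * (Nat.totient 96 : ℝ) * Real.log 96 * Real.log (Nat.totient 96) :=
  case_gen 96 313 32 456 346 (P_le 96 313 (by norm_num) (by decide))
    (by decide) (log_ge 96 456 (by norm_num)) (log_ge 32 346 (by norm_num)) (by norm_num)

lemma case_97 : (P 97 : ℝ) < 3 * (Nat.totient 97 : ℝ) * Real.log 97 * Real.log (Nat.totient 97) :=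
  case_gen 97 1499 96 457 456 (P_le 97 1499 (by norm_num) (by decide))
    (by decide) (log_ge 97 457 (by norm_num)) (log_ge 96 456 (by norm_num)) (by norm_num)

lemma case_98 : (P 98 : ℝ) < 3 * (Nat.totient 98 : ℝ) * Real.log 98 * Real.log (Nat.totient 98) :=
  case_gen 98 613 42 458 373 (P_le 98 613 (by norm_num) (by decide))
    (by decide) (log_ge 98 458 (by norm_num)) (log_ge 42 373 (by norm_num)) (by norm_num)

lemma case_99 : (P 99 : ℝ) < 3 * (Nat.totient 99 : ℝ) * Real.log 99 * Real.log (Nat.totient 99) :=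
  case_gen 99 643 60 459 409 (P_le 99 643 (by norm_num) (by decide))
    (by decide) (log_ge 99 459 (by norm_num)) (log_ge 60 409 (by norm_num)) (by norm_num)

lemma case_100 : (P 100 : ℝ) < 3 * (Nat.totient 100 : ℝ) * Real.log 100 * Real.log (Nat.totient 100) :=
  case_gen 100 487 40 460 368 (P_le 100 487 (by norm_num) (by decide))
    (by decide) (log_ge 100 460 (by norm_num)) (log_ge 40 368 (by norm_num)) (by norm_num)

theorem stmt_8 (n : ℕ) (h4 : 4 ≤ n) (h100 : n ≤ 100) :
    (P n : ℝ) < 3 * (Nat.totient n : ℝ) * Real.log n * Real.log (Nat.totient n) := by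
  interval_cases n
  · exact case_4
  · exact case_5
  · exact case_6
  · exact case_7
  · exact case_8
  · exact case_9
  · exact case_10
  · exact case_11
  · exact case_12
  · exact case_13
  · exact case_14
  · exact case_15
  · exact case_16
  · exact case_17
  · exact case_18
  · exact case_19
  · exact case_20
  · exact case_21
  · exact case_22
  · exact case_23
  · exact case_24
  · exact case_25
  · exact case_26
  · exact case_27
  · exact case_28
  · exact case_29
  · exact case_30
  · exact case_31
  · exact case_32
  · exact case_33
  · exact case_34
  · exact case_35
  · exact case_36
  · exact case_37
  · exact case_38
  · exact case_39
  · exact case_40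
  · exact case_41
  · exact case_42
  · exact case_43
  · exact case_44
  · exact case_45
  · exact case_46
  · exact case_47
  · exact case_48
  · exact case_49
  · exact case_50
  · exact case_51
  · exact case_52
  · exact case_53
  · exact case_54
  · exact case_55
  · exact case_56
  · exact case_57
  · exact case_58
  · exact case_59
  · exact case_60
  · exact case_61
  · exact case_62
  · exact case_63
  · exact case_64
  · exact case_65
  · exact case_66
  · exact case_67
  · exact case_68
  · exact case_69
  · exact case_70
  · exact case_71
  · exact case_72
  · exact case_73
  · exact case_74
  · exact case_75
  · exact case_76
  · exact case_77
  · exact case_78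
  · exact case_79
  · exact case_80
  · exact case_81
  · exact case_82
  · exact case_83
  · exact case_84
  · exact case_85
  · exact case_86
  · exact case_87
  · exact case_88
  · exact case_89
  · exact case_90
  · exact case_91
  · exact case_92
  · exact case_93
  · exact case_94
  · exact case_95
  · exact case_96
  · exact case_97
  · exact case_98
  · exact case_99
  · exact case_100
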